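/- Let n ≥ 1 and for each i = 1, …, n let d_i ≥ 0, c_i ∈ ℝ, h_i > 0, and let D_i be the trapezoidal fuzzy variable (a_i − α_i, a_i, b_i, b_i + β_i) with α_i > 0, β_i > 0, 0 < a_i − α_i, and a_i ≤ b_i. For λ = 1/2 (the credibilistic case), set e_i = ∫_0^∞ m_{1/2}(D_i ≤ 1/r) dr and f(x) = Σ_{i=1}^n (d_i·x_i − c_i − (h_i·x_i²/2)·e_i). Then f(y) ≤ f(x*) for every y ∈ ℝⁿ with y_i ≥ 0, where x_i* = 2·d_i / ( h_i·[ (1/α_i)·ln(a_i/(a_i − α_i)) + (1/β_i)·ln((b_i + β_i)/b_i) ] ). -/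

import Mathlib

open MeasureTheory Set

/-- Possibility measure of an event `A` built from membership function `μ`
(with the convention `sSup ∅ = 0`, which holds for `Real.sSup`). -/
noncomputable def Pos (μ : ℝ → ℝ) (A : Set ℝ) : ℝ := sSup (μ '' A)

/-- Necessity measure associated with `μ`. -/
noncomputable def Nec (μ : ℝ → ℝ) (A : Set ℝ) : ℝ := 1 - Pos μ Aᶜ

/-- The parametric measure `m_λ(A) = λ·Pos(A) + (1−λ)·Nec(A)`. -/
noncomputable def mMeas (l : ℝ) (μ : ℝ → ℝ) (A : Set ℝ) : ℝ :=
  l * Pos μ A + (1 - l) * Nec μ A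

/-- The `m_λ`-expected value of the fuzzy variable with membership function `μ`:
`E_λ(ξ) = ∫_{−∞}^0 (m_λ([r,∞)) − 1) dr + ∫_0^∞ m_λ([r,∞)) dr`. -/
noncomputable def Eexp (l : ℝ) (μ : ℝ → ℝ) : ℝ :=
  (∫ r in Set.Iic (0:ℝ), (mMeas l μ (Set.Ici r) - 1)) +
  (∫ r in Set.Ioi (0:ℝ), mMeas l μ (Set.Ici r))

/-- Membership function of the trapezoidal fuzzy variable `(r1,r2,r3,r4)`. -/
noncomputable def trapMF (r1 r2 r3 r4 : ℝ) : ℝ → ℝ := fun x =>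
  if r1 ≤ x ∧ x ≤ r2 then (x - r1) / (r2 - r1)
  else if r2 ≤ x ∧ x ≤ r3 then 1
  else if r3 ≤ x ∧ x ≤ r4 then (r4 - x) / (r4 - r3)
  else 0

/-- Membership function of the triangular fuzzy variable `(r1,r2,r4)`. -/
noncomputable def triMF (r1 r2 r4 : ℝ) : ℝ → ℝ := fun x =>
  if r1 ≤ x ∧ x ≤ r2 then (x - r1) / (r2 - r1)
  else if r2 ≤ x ∧ x ≤ r4 then (r4 - x) / (r4 - r2)
  else 0

/-- Membership function of the trapezoidal fuzzy variable `(a−α, a, b, b+β)`. -/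
noncomputable def trapMF2 (a b α β : ℝ) : ℝ → ℝ := fun x =>
  if a - α ≤ x ∧ x ≤ a then 1 - (a - x) / α
  else if a ≤ x ∧ x ≤ b then 1
  else if b ≤ x ∧ x ≤ b + β then 1 - (x - b) / β
  else 0

/-- Membership function of the triangular fuzzy variable `(a−α, a, a+β)`. -/
noncomputable def triMF2 (a α β : ℝ) : ℝ → ℝ := fun x =>
  if a - α ≤ x ∧ x ≤ a then 1 - (a - x) / α
  else if a ≤ x ∧ x ≤ a + β then 1 - (x - a) / β
  else 0

namespace Stmt13Aux

open MeasureTheory Set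

variable {a b α β t : ℝ}

lemma mu_le_one (hα : 0 < α) (hβ : 0 < β) (x : ℝ) : trapMF2 a b α β x ≤ 1 := by
  unfold trapMF2
  split_ifs with h1 h2 h3
  · have h0 : 0 ≤ (a - x) / α := div_nonneg (by linarith [h1.2]) hα.le
    linarith
  · exact le_rfl
  · have h0 : 0 ≤ (x - b) / β := div_nonneg (by linarith [h3.1]) hβ.le
    linarith
  · norm_num

lemma bdd (hα : 0 < α) (hβ : 0 < β) (s : Set ℝ) : BddAbove (trapMF2 a b α β '' s) :=
  ⟨1, by rintro y ⟨x, -, rfl⟩; exact mu_le_one hα hβ x⟩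

lemma mu_zero_left (hα : 0 < α) (hab : a ≤ b) {x : ℝ} (hx : x < a - α) :
    trapMF2 a b α β x = 0 := by
  have h1 : ¬(a - α ≤ x ∧ x ≤ a) := fun h => absurd h.1 (not_le.2 hx)
  have h2 : ¬(a ≤ x ∧ x ≤ b) := fun h => by linarith [h.1]
  have h3 : ¬(b ≤ x ∧ x ≤ b + β) := fun h => by linarith [h.1]
  simp only [trapMF2, if_neg h1, if_neg h2, if_neg h3]

lemma mu_left {x : ℝ} (h1 : a - α ≤ x) (h2 : x ≤ a) :
    trapMF2 a b α β x = 1 - (a - x) / α := by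
  simp only [trapMF2, if_pos (And.intro h1 h2)]

lemma mu_one (hα : 0 < α) {x : ℝ} (h1 : a ≤ x) (h2 : x ≤ b) : trapMF2 a b α β x = 1 := by
  unfold trapMF2
  split_ifs with hc1 hc2 hc3
  · have hx : a - x = 0 := by linarith [hc1.2]
    rw [hx, zero_div]; ring
  · rfl
  · exact absurd ⟨h1, h2⟩ hc2
  · exact absurd ⟨h1, h2⟩ hc2

lemma mu_right (hα : 0 < α) (hβ : 0 < β) (hab : a ≤ b) {x : ℝ} (h1 : b ≤ x)
    (h2 : x ≤ b + β) : trapMF2 a b α β x = 1 - (x - b) / β := by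
  unfold trapMF2
  split_ifs with hc1 hc2 hc3
  · have e1 : a - x = 0 := by linarith [hc1.2]
    have e2 : x - b = 0 := by linarith [hc1.2]
    rw [e1, e2, zero_div, zero_div]
  · have e2 : x - b = 0 := by linarith [hc2.2]
    rw [e2, zero_div]; ring
  · rfl
  · exact absurd ⟨h1, h2⟩ hc3

lemma mu_zero_right (hβ : 0 < β) (hab : a ≤ b) {x : ℝ} (hx : b + β < x) :
    trapMF2 a b α β x = 0 := by
  have h1 : ¬(a - α ≤ x ∧ x ≤ a) := fun h => by linarith [h.2]
  have h2 : ¬(a ≤ x ∧ x ≤ b) := fun h => by linarith [h.2]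
  have h3 : ¬(b ≤ x ∧ x ≤ b + β) := fun h => by linarith [h.2]
  simp only [trapMF2, if_neg h1, if_neg h2, if_neg h3]

lemma pos_Iic_lt (hα : 0 < α) (hab : a ≤ b) (ht : t < a - α) :
    Pos (trapMF2 a b α β) (Iic t) = 0 := by
  apply IsGreatest.csSup_eq
  refine ⟨⟨t, Set.mem_Iic.2 le_rfl, mu_zero_left hα hab ht⟩, ?_⟩
  rintro y ⟨x, hx, rfl⟩
  rw [mu_zero_left hα hab (lt_of_le_of_lt (Set.mem_Iic.1 hx) ht)]

lemma pos_Iic_mid (hα : 0 < α) (hab : a ≤ b) (h1 : a - α ≤ t) (h2 : t ≤ a) :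
    Pos (trapMF2 a b α β) (Iic t) = 1 - (a - t) / α := by
  apply IsGreatest.csSup_eq
  refine ⟨⟨t, Set.mem_Iic.2 le_rfl, mu_left h1 h2⟩, ?_⟩
  rintro y ⟨x, hx, rfl⟩
  have hx' : x ≤ t := Set.mem_Iic.1 hx
  rcases lt_or_ge x (a - α) with h | h
  · rw [mu_zero_left hα hab h]
    have : (a - t) / α ≤ 1 := div_le_one_of_le₀ (by linarith) hα.le
    linarith
  · rw [mu_left h (by linarith)]
    have : (a - t) / α ≤ (a - x) / α := by
      rw [div_le_div_iff₀ hα hα]; nlinarith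
    linarith

lemma pos_Iic_ge (hα : 0 < α) (hβ : 0 < β) (hab : a ≤ b) (ht : a ≤ t) :
    Pos (trapMF2 a b α β) (Iic t) = 1 := by
  apply IsGreatest.csSup_eq
  refine ⟨⟨a, Set.mem_Iic.2 ht, mu_one hα le_rfl hab⟩, ?_⟩
  rintro y ⟨x, -, rfl⟩
  exact mu_le_one hα hβ x

lemma pos_Ioi_lt' (hα : 0 < α) (hβ : 0 < β) (hab : a ≤ b) (ht : t < b) :
    Pos (trapMF2 a b α β) (Ioi t) = 1 := by
  apply IsGreatest.csSup_eq
  constructor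
  · rcases lt_or_ge t a with h | h
    · exact ⟨a, Set.mem_Ioi.2 h, mu_one hα le_rfl hab⟩
    · exact ⟨(t + b) / 2, Set.mem_Ioi.2 (by linarith),
        mu_one hα (by linarith) (by linarith)⟩
  · rintro y ⟨x, -, rfl⟩
    exact mu_le_one hα hβ x

lemma pos_Ioi_mid (hα : 0 < α) (hβ : 0 < β) (hab : a ≤ b) (h1 : b ≤ t) (h2 : t ≤ b + β) :
    Pos (trapMF2 a b α β) (Ioi t) = 1 - (t - b) / β := by
  have hL0 : 0 ≤ 1 - (t - b) / β := by
    have : (t - b) / β ≤ 1 := div_le_one_of_le₀ (by linarith) hβ.le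
    linarith
  apply le_antisymm
  · apply Real.sSup_le _ hL0
    rintro y ⟨x, hx, rfl⟩
    have hx' : t < x := Set.mem_Ioi.1 hx
    rcases le_or_gt x (b + β) with h | h
    · rw [mu_right hα hβ hab (by linarith) h]
      have : (t - b) / β ≤ (x - b) / β := by
        rw [div_le_div_iff₀ hβ hβ]; nlinarith
      linarith
    · rw [mu_zero_right hβ hab h]; exact hL0
  · apply le_of_forall_lt
    intro c hc
    rcases eq_or_lt_of_le h2 with heq | hlt
    · have hq : (t - b) / β = 1 := by
        rw [heq]; field_simp; ring
      have hc0 : c < 0 := by rw [hq] at hc; linarith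
      have h0 : (0:ℝ) ≤ sSup (trapMF2 a b α β '' Ioi t) :=
        le_csSup (bdd hα hβ _) ⟨t + 1, Set.mem_Ioi.2 (by linarith),
          mu_zero_right hβ hab (by linarith)⟩
      exact lt_of_lt_of_le hc0 h0
    · have h' : (t - b) / β < 1 - c := by linarith
      have hub : t - b < (1 - c) * β := (div_lt_iff₀ hβ).1 h'
      have hmin : t < min (b + β) (b + (1 - c) * β) := lt_min (by linarith) (by linarith)
      set x := (t + min (b + β) (b + (1 - c) * β)) / 2 with hxdef
      have hxt : t < x := by
        have := hmin
        simp only [hxdef]; linarith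
      have hxle : x ≤ b + β := by
        have h5 : min (b + β) (b + (1 - c) * β) ≤ b + β := min_le_left _ _
        simp only [hxdef]; linarith
      have hxlt : x < b + (1 - c) * β := by
        have h5 : min (b + β) (b + (1 - c) * β) ≤ b + (1 - c) * β := min_le_right _ _
        simp only [hxdef]; linarith
      have hcx : c < trapMF2 a b α β x := by
        rw [mu_right hα hβ hab (by linarith) hxle]
        have : (x - b) / β < 1 - c := (div_lt_iff₀ hβ).2 (by nlinarith)
        linarith
      calc c < trapMF2 a b α β x := hcx
        _ ≤ _ := le_csSup (bdd hα hβ _) ⟨x, Set.mem_Ioi.2 hxt, rfl⟩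

lemma pos_Ioi_ge (hβ : 0 < β) (hab : a ≤ b) (ht : b + β ≤ t) :
    Pos (trapMF2 a b α β) (Ioi t) = 0 := by
  apply IsGreatest.csSup_eq
  refine ⟨⟨t + 1, Set.mem_Ioi.2 (by linarith), mu_zero_right hβ hab (by linarith)⟩, ?_⟩
  rintro y ⟨x, hx, rfl⟩
  rw [mu_zero_right hβ hab (lt_of_le_of_lt ht (Set.mem_Ioi.1 hx))]


lemma mMeas_Iic (l : ℝ) (μ : ℝ → ℝ) (t : ℝ) :
    mMeas l μ (Set.Iic t) = l * Pos μ (Set.Iic t) + (1 - l) * (1 - Pos μ (Set.Ioi t)) := by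
  simp [mMeas, Nec, Set.compl_Iic]

lemma pos_Ioi_le (hα : 0 < α) (hβ : 0 < β) (hab : a ≤ b) (ht : t ≤ b) :
    Pos (trapMF2 a b α β) (Ioi t) = 1 := by
  rcases lt_or_eq_of_le ht with h | h
  · exact pos_Ioi_lt' hα hβ hab h
  · rw [pos_Ioi_mid hα hβ hab h.ge (by linarith), ← h]
    simp

lemma F0 (hα : 0 < α) (hβ : 0 < β) (hab : a ≤ b) (ht : t < a - α) :
    mMeas (1/2) (trapMF2 a b α β) (Iic t) = 0 := by
  rw [mMeas_Iic, pos_Iic_lt hα hab ht, pos_Ioi_le hα hβ hab (by linarith)]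
  ring

lemma F1 (hα : 0 < α) (hβ : 0 < β) (hab : a ≤ b) (h1 : a - α ≤ t) (h2 : t ≤ a) :
    mMeas (1/2) (trapMF2 a b α β) (Iic t) = (1 - (a - t) / α) / 2 := by
  rw [mMeas_Iic, pos_Iic_mid hα hab h1 h2, pos_Ioi_le hα hβ hab (le_trans h2 hab)]
  ring

lemma F2 (hα : 0 < α) (hβ : 0 < β) (hab : a ≤ b) (h1 : a ≤ t) (h2 : t ≤ b) :
    mMeas (1/2) (trapMF2 a b α β) (Iic t) = 1/2 := by
  rw [mMeas_Iic, pos_Iic_ge hα hβ hab h1, pos_Ioi_le hα hβ hab h2]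
  norm_num

lemma F3 (hα : 0 < α) (hβ : 0 < β) (hab : a ≤ b) (h1 : b ≤ t) (h2 : t ≤ b + β) :
    mMeas (1/2) (trapMF2 a b α β) (Iic t) = 1/2 + (t - b) / (2*β) := by
  rw [mMeas_Iic, pos_Iic_ge hα hβ hab (le_trans hab h1), pos_Ioi_mid hα hβ hab h1 h2]
  ring

lemma F4 (hα : 0 < α) (hβ : 0 < β) (hab : a ≤ b) (ht : b + β ≤ t) :
    mMeas (1/2) (trapMF2 a b α β) (Iic t) = 1 := by
  rw [mMeas_Iic, pos_Iic_ge hα hβ hab (by linarith), pos_Ioi_ge hβ hab ht]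
  norm_num


lemma hdisj (x y : ℝ) : Disjoint (Ioc x y) (Ioi y) := by
  rw [Set.disjoint_left]
  intro z hz hz'
  exact absurd hz.2 (not_le.2 hz')

lemma e_eq (hα : 0 < α) (hβ : 0 < β) (hpos : 0 < a - α) (hab : a ≤ b) :
    (∫ r in Set.Ioi (0:ℝ), mMeas (1/2) (trapMF2 a b α β) (Set.Iic (1 / r)))
      = (1/α * Real.log (a/(a-α)) + 1/β * Real.log ((b+β)/b)) / 2 := by
  have ha0 : 0 < a := by linarith
  have hb0 : 0 < b := lt_of_lt_of_le ha0 hab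
  have hbβ : 0 < b + β := by linarith
  set G : ℝ → ℝ := fun r => mMeas (1/2) (trapMF2 a b α β) (Set.Iic (1 / r)) with hGdef
  set p1 := 1/(b+β) with hd1
  set p2 := 1/b with hd2
  set p3 := 1/a with hd3
  set p4 := 1/(a-α) with hd4
  have hp1 : 0 < p1 := by rw [hd1]; positivity
  have hp2 : 0 < p2 := by rw [hd2]; positivity
  have hp3 : 0 < p3 := by rw [hd3]; positivity
  have hp4 : 0 < p4 := by rw [hd4]; positivity
  have h12 : p1 ≤ p2 := one_div_le_one_div_of_le hb0 (by linarith)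
  have h23 : p2 ≤ p3 := one_div_le_one_div_of_le ha0 hab
  have h34 : p3 ≤ p4 := one_div_le_one_div_of_le hpos (by linarith)
  -- EqOn facts
  have hE0 : EqOn G (fun _ => (1:ℝ)) (Ioc 0 p1) := by
    intro r hr
    have hr0 : 0 < r := hr.1
    have : b + β ≤ 1/r := by
      have := one_div_le_one_div_of_le hr0 hr.2
      rwa [hd1, one_div_one_div] at this
    exact F4 hα hβ hab this
  have hE1 : EqOn G (fun r => 1/2 + (1/r - b)/(2*β)) (Ioc p1 p2) := by
    intro r hr
    have hr0 : 0 < r := lt_trans hp1 hr.1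
    have hu : 1/r < b + β := by
      have := one_div_lt_one_div_of_lt hp1 hr.1
      rwa [hd1, one_div_one_div] at this
    have hl : b ≤ 1/r := by
      have := one_div_le_one_div_of_le hr0 hr.2
      rwa [hd2, one_div_one_div] at this
    exact F3 hα hβ hab hl hu.le
  have hE2 : EqOn G (fun _ => (1:ℝ)/2) (Ioc p2 p3) := by
    intro r hr
    have hr0 : 0 < r := lt_trans hp2 hr.1
    have hu : 1/r < b := by
      have := one_div_lt_one_div_of_lt hp2 hr.1
      rwa [hd2, one_div_one_div] at this
    have hl : a ≤ 1/r := by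
      have := one_div_le_one_div_of_le hr0 hr.2
      rwa [hd3, one_div_one_div] at this
    exact F2 hα hβ hab hl hu.le
  have hE3 : EqOn G (fun r => (1 - (a - 1/r)/α)/2) (Ioc p3 p4) := by
    intro r hr
    have hr0 : 0 < r := lt_trans hp3 hr.1
    have hu : 1/r < a := by
      have := one_div_lt_one_div_of_lt hp3 hr.1
      rwa [hd3, one_div_one_div] at this
    have hl : a - α ≤ 1/r := by
      have := one_div_le_one_div_of_le hr0 hr.2
      rwa [hd4, one_div_one_div] at this
    exact F1 hα hβ hab hl hu.le
  have hE4 : EqOn G (fun _ => (0:ℝ)) (Ioi p4) := by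
    intro r hr
    have hr0 : 0 < r := lt_trans hp4 hr
    have hu : 1/r < a - α := by
      have := one_div_lt_one_div_of_lt hp4 hr
      rwa [hd4, one_div_one_div] at this
    exact F0 hα hβ hab hu
  -- continuity
  have c1 : ContinuousOn (fun r : ℝ => 1/2 + (1/r - b)/(2*β)) (Icc p1 p2) := by
    apply ContinuousOn.add continuousOn_const
    apply ContinuousOn.div_const
    apply ContinuousOn.sub _ continuousOn_const
    exact continuousOn_const.div continuousOn_id
      (fun x hx => ne_of_gt (lt_of_lt_of_le hp1 hx.1))
  have c3 : ContinuousOn (fun r : ℝ => (1 - (a - 1/r)/α)/2) (Icc p3 p4) := by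
    apply ContinuousOn.div_const
    apply ContinuousOn.sub continuousOn_const
    apply ContinuousOn.div_const
    apply ContinuousOn.sub continuousOn_const
    exact continuousOn_const.div continuousOn_id
      (fun x hx => ne_of_gt (lt_of_lt_of_le hp3 hx.1))
  -- integrability of G on pieces
  have iG0 : IntegrableOn G (Ioc 0 p1) := by
    apply IntegrableOn.congr_fun _ hE0.symm measurableSet_Ioc
    exact integrableOn_const measure_Ioc_lt_top.ne
  have iG1 : IntegrableOn G (Ioc p1 p2) := by
    apply IntegrableOn.congr_fun _ hE1.symm measurableSet_Ioc
    exact (c1.integrableOn_Icc).mono_set Ioc_subset_Icc_self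
  have iG2 : IntegrableOn G (Ioc p2 p3) := by
    apply IntegrableOn.congr_fun _ hE2.symm measurableSet_Ioc
    exact integrableOn_const measure_Ioc_lt_top.ne
  have iG3 : IntegrableOn G (Ioc p3 p4) := by
    apply IntegrableOn.congr_fun _ hE3.symm measurableSet_Ioc
    exact (c3.integrableOn_Icc).mono_set Ioc_subset_Icc_self
  have iG4 : IntegrableOn G (Ioi p4) := by
    apply IntegrableOn.congr_fun _ hE4.symm measurableSet_Ioi
    exact integrableOn_zero
  -- values
  have v0 : ∫ r in Ioc (0:ℝ) p1, G r = p1 := by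
    rw [setIntegral_congr_fun measurableSet_Ioc hE0, setIntegral_const,
      Real.volume_real_Ioc_of_le (by linarith)]
    simp
  have v1 : ∫ r in Ioc p1 p2, G r =
      (p2/2 + (Real.log p2 - b*p2)/(2*β)) - (p1/2 + (Real.log p1 - b*p1)/(2*β)) := by
    rw [setIntegral_congr_fun measurableSet_Ioc hE1, ← intervalIntegral.integral_of_le h12]
    refine intervalIntegral.integral_eq_sub_of_hasDerivAt
      (f := fun r : ℝ => r/2 + (Real.log r - b*r)/(2*β)) ?_ ?_
    · intro x hx
      rw [uIcc_of_le h12] at hx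
      have hx0 : 0 < x := lt_of_lt_of_le hp1 hx.1
      have hD1 : HasDerivAt (fun r : ℝ => r/2) ((1:ℝ)/2) x := by
        simpa using (hasDerivAt_id' x).div_const 2
      have hD2 : HasDerivAt (fun r : ℝ => (Real.log r - b*r)/(2*β)) ((1/x - b)/(2*β)) x := by
        have := ((Real.hasDerivAt_log hx0.ne').sub ((hasDerivAt_id' x).const_mul b)).div_const (2*β)
        simpa [one_div] using this
      exact hD1.add hD2
    · apply ContinuousOn.intervalIntegrable
      rw [uIcc_of_le h12]
      exact c1
  have v2 : ∫ r in Ioc p2 p3, G r = (p3 - p2) * (1/2) := by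
    rw [setIntegral_congr_fun measurableSet_Ioc hE2, setIntegral_const,
      Real.volume_real_Ioc_of_le (by linarith)]
    simp
  have v3 : ∫ r in Ioc p3 p4, G r =
      ((p4 - (a*p4 - Real.log p4)/α)/2) - ((p3 - (a*p3 - Real.log p3)/α)/2) := by
    rw [setIntegral_congr_fun measurableSet_Ioc hE3, ← intervalIntegral.integral_of_le h34]
    refine intervalIntegral.integral_eq_sub_of_hasDerivAt
      (f := fun r : ℝ => (r - (a*r - Real.log r)/α)/2) ?_ ?_
    · intro x hx
      rw [uIcc_of_le h34] at hx
      have hx0 : 0 < x := lt_of_lt_of_le hp3 hx.1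
      have hD : HasDerivAt (fun r : ℝ => (r - (a*r - Real.log r)/α)/2)
          ((1 - (a - 1/x)/α)/2) x := by
        have := ((hasDerivAt_id' x).sub
          ((((hasDerivAt_id' x).const_mul a).sub (Real.hasDerivAt_log hx0.ne')).div_const α)).div_const 2
        simpa [one_div] using this
      exact hD
    · apply ContinuousOn.intervalIntegrable
      rw [uIcc_of_le h34]
      exact c3
  have v4 : ∫ r in Ioi p4, G r = 0 := by
    rw [setIntegral_congr_fun measurableSet_Ioi hE4]
    simp
  -- splitting
  have hs3 : Ioc p3 p4 ∪ Ioi p4 = Ioi p3 := Ioc_union_Ioi_eq_Ioi h34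
  have hs2 : Ioc p2 p3 ∪ Ioi p3 = Ioi p2 := Ioc_union_Ioi_eq_Ioi h23
  have hs1 : Ioc p1 p2 ∪ Ioi p2 = Ioi p1 := Ioc_union_Ioi_eq_Ioi h12
  have hs0 : Ioc 0 p1 ∪ Ioi p1 = Ioi (0:ℝ) := Ioc_union_Ioi_eq_Ioi hp1.le
  have I3 : IntegrableOn G (Ioi p3) := by rw [← hs3]; exact iG3.union iG4
  have E3 : ∫ r in Ioi p3, G r = (∫ r in Ioc p3 p4, G r) + ∫ r in Ioi p4, G r := by
    rw [← hs3, setIntegral_union (hdisj p3 p4) measurableSet_Ioi iG3 iG4]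
  have I2 : IntegrableOn G (Ioi p2) := by rw [← hs2]; exact iG2.union I3
  have E2 : ∫ r in Ioi p2, G r = (∫ r in Ioc p2 p3, G r) + ∫ r in Ioi p3, G r := by
    rw [← hs2, setIntegral_union (hdisj p2 p3) measurableSet_Ioi iG2 I3]
  have I1 : IntegrableOn G (Ioi p1) := by rw [← hs1]; exact iG1.union I2
  have E1 : ∫ r in Ioi p1, G r = (∫ r in Ioc p1 p2, G r) + ∫ r in Ioi p2, G r := by
    rw [← hs1, setIntegral_union (hdisj p1 p2) measurableSet_Ioi iG1 I2]
  have E0 : ∫ r in Ioi (0:ℝ), G r = (∫ r in Ioc (0:ℝ) p1, G r) + ∫ r in Ioi p1, G r := by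
    rw [← hs0, setIntegral_union (hdisj 0 p1) measurableSet_Ioi iG0 I1]
  -- combine
  have hEq : (∫ r in Set.Ioi (0:ℝ), mMeas (1/2) (trapMF2 a b α β) (Set.Iic (1 / r)))
      = ∫ r in Ioi (0:ℝ), G r := rfl
  rw [hEq, E0, E1, E2, E3, v0, v1, v2, v3, v4]
  -- log simplification
  have l1 : Real.log p1 = -Real.log (b+β) := by rw [hd1, one_div, Real.log_inv]
  have l2 : Real.log p2 = -Real.log b := by rw [hd2, one_div, Real.log_inv]
  have l3 : Real.log p3 = -Real.log a := by rw [hd3, one_div, Real.log_inv]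
  have l4 : Real.log p4 = -Real.log (a-α) := by rw [hd4, one_div, Real.log_inv]
  rw [l1, l2, l3, l4, Real.log_div ha0.ne' hpos.ne', Real.log_div hbβ.ne' hb0.ne',
    hd1, hd2, hd3, hd4]
  field_simp
  ring

end Stmt13Aux
theorem stmt_13 (n : ℕ) (hn : 1 ≤ n)
    (d c hh a b α β e xs : Fin n → ℝ)
    (hd : ∀ i, 0 ≤ d i) (hhpos : ∀ i, 0 < hh i)
    (hα : ∀ i, 0 < α i) (hβ : ∀ i, 0 < β i)
    (hpos : ∀ i, 0 < a i - α i) (hab : ∀ i, a i ≤ b i)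
    (he : ∀ i, e i =
      ∫ r in Set.Ioi (0:ℝ), mMeas (1/2) (trapMF2 (a i) (b i) (α i) (β i)) (Set.Iic (1 / r)))
    (hxs : ∀ i, xs i = 2 * d i / (hh i *
      (1 / α i * Real.log (a i / (a i - α i)) +
        1 / β i * Real.log ((b i + β i) / b i)))) :
    ∀ y : Fin n → ℝ, (∀ i, 0 ≤ y i) →
      (∑ i, (d i * y i - c i - hh i * y i ^ 2 / 2 * e i)) ≤
      (∑ i, (d i * xs i - c i - hh i * xs i ^ 2 / 2 * e i)) := by
  intro y hy
  apply Finset.sum_le_sum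
  intro i _
  set K := 1 / α i * Real.log (a i / (a i - α i)) + 1 / β i * Real.log ((b i + β i) / b i)
    with hKdef
  clear_value K
  have hKpos : 0 < K := by
    have hl1 : 0 < Real.log (a i / (a i - α i)) := by
      apply Real.log_pos
      rw [lt_div_iff₀ (hpos i)]
      have := hα i; linarith
    have hl2 : 0 < Real.log ((b i + β i) / b i) := by
      apply Real.log_pos
      have hb0 : 0 < b i := by
        have h1 := hpos i; have h2 := hα i; have h3 := hab i; linarith
      rw [lt_div_iff₀ hb0]
      have := hβ i; linarith
    have h1 : 0 < 1 / α i := one_div_pos.2 (hα i)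
    have h2 : 0 < 1 / β i := one_div_pos.2 (hβ i)
    rw [hKdef]
    exact add_pos (mul_pos h1 hl1) (mul_pos h2 hl2)
  have heq : e i = K / 2 := by
    rw [he i, Stmt13Aux.e_eq (hα i) (hβ i) (hpos i) (hab i), hKdef]
  have hepos : 0 < e i := by rw [heq]; linarith
  have hhK : (0:ℝ) < hh i * K := mul_pos (hhpos i) hKpos
  have hhe : 0 < hh i * e i := mul_pos (hhpos i) hepos
  have hde : d i = hh i * e i * xs i := by
    have h1 : hh i ≠ 0 := (hhpos i).ne'
    have h2 : K ≠ 0 := hKpos.ne'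
    rw [hxs i, heq, ← hKdef]
    field_simp
  rw [hde]
  nlinarith [mul_nonneg hhe.le (sq_nonneg (xs i - y i))]
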